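/- The Hamiltonian H = |q|p²/(2(η+|q|)) − k/(η+|q|) Poisson-commutes with each of the 2N−3 angular observables C^{(m)} = Σ_{1≤i<j≤m}(qᵢpⱼ−qⱼpᵢ)² and C_{(m)} = Σ_{N−m<i<j≤N}(qᵢpⱼ−qⱼpᵢ)² for m = 2,…,N. -/

import Mathlib

open Filter Topology Real

/-- Euclidean norm of a point of ℝᴺ. -/
noncomputable def nrm {N : ℕ} (q : Fin N → ℝ) : ℝ := Real.sqrt (∑ i, q i ^ 2)

/-- The canonical Poisson bracket {F,G} = Σᵢ (∂F/∂qᵢ ∂G/∂pᵢ − ∂F/∂pᵢ ∂G/∂qᵢ)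
on phase space ℝᴺ × ℝᴺ, evaluated at a point `x = (q,p)`. -/
noncomputable def pbracket {N : ℕ}
    (F G : (Fin N → ℝ) × (Fin N → ℝ) → ℝ)
    (x : (Fin N → ℝ) × (Fin N → ℝ)) : ℝ :=
  ∑ i : Fin N,
    (deriv (fun t => F (Function.update x.1 i t, x.2)) (x.1 i) *
       deriv (fun t => G (x.1, Function.update x.2 i t)) (x.2 i) -
     deriv (fun t => F (x.1, Function.update x.2 i t)) (x.2 i) *
       deriv (fun t => G (Function.update x.1 i t, x.2)) (x.1 i))

/-- Angular momentum component J_{ij} = qᵢ pⱼ − qⱼ pᵢ. -/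
def J {N : ℕ} (i j : Fin N) (x : (Fin N → ℝ) × (Fin N → ℝ)) : ℝ :=
  x.1 i * x.2 j - x.1 j * x.2 i

/-- The deformed Coulomb Hamiltonian H = |q| p² / (2(η+|q|)) − k/(η+|q|). -/
noncomputable def Ham {N : ℕ} (η k : ℝ)
    (x : (Fin N → ℝ) × (Fin N → ℝ)) : ℝ :=
  nrm x.1 * (∑ i, x.2 i ^ 2) / (2 * (η + nrm x.1)) - k / (η + nrm x.1)

/-- The i-th component of the deformed Runge–Lenz vector. -/
noncomputable def RL {N : ℕ} (η k : ℝ) (i : Fin N)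
    (x : (Fin N → ℝ) × (Fin N → ℝ)) : ℝ :=
  (∑ j, x.2 j * (x.1 j * x.2 i - x.1 i * x.2 j)) +
    x.1 i / nrm x.1 * (η * Ham η k x + k)

/-- C^{(m)} = Σ_{1≤i<j≤m} (qᵢpⱼ−qⱼpᵢ)² (indices 1,…,m in 1-based numbering,
i.e. `(j : ℕ) < m` in 0-based numbering). -/
def Cup {N : ℕ} (m : ℕ) (x : (Fin N → ℝ) × (Fin N → ℝ)) : ℝ :=
  ∑ i : Fin N, ∑ j : Fin N,
    if i < j ∧ (j : ℕ) < m then (J i j x) ^ 2 else 0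

/-- C_{(m)} = Σ_{N−m<i<j≤N} (qᵢpⱼ−qⱼpᵢ)² (indices N−m+1,…,N in 1-based
numbering, i.e. `N − m ≤ (i : ℕ)` in 0-based numbering). -/
def Cdown {N : ℕ} (m : ℕ) (x : (Fin N → ℝ) × (Fin N → ℝ)) : ℝ :=
  ∑ i : Fin N, ∑ j : Fin N,
    if i < j ∧ N - m ≤ (i : ℕ) then (J i j x) ^ 2 else 0



lemma sum_update_sq {N : ℕ} (f : Fin N → ℝ) (i : Fin N) (t : ℝ) :
    ∑ j, (Function.update f i t) j ^ 2 = t ^ 2 + ∑ j ∈ Finset.univ \ {i}, f j ^ 2 := by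
  have h : (fun j => (Function.update f i t) j ^ 2)
      = Function.update (fun j => f j ^ 2) i (t ^ 2) := by
    funext j
    rcases eq_or_ne j i with h | h
    · subst h; simp
    · simp [Function.update_of_ne h]
  calc ∑ j, (Function.update f i t) j ^ 2
      = ∑ j, Function.update (fun j => f j ^ 2) i (t ^ 2) j := by rw [h]
    _ = t ^ 2 + ∑ j ∈ Finset.univ \ {i}, f j ^ 2 :=
        Finset.sum_update_of_mem (Finset.mem_univ i) _ _

lemma hasDerivAt_ite_id {N : ℕ} (b i : Fin N) (f : Fin N → ℝ) (t₀ : ℝ) :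
    HasDerivAt (fun t : ℝ => if b = i then t else f b) (if b = i then 1 else 0) t₀ := by
  by_cases hb : b = i
  · simp only [if_pos hb]; exact hasDerivAt_id _
  · simp only [if_neg hb]; exact hasDerivAt_const _ _

lemma hasDerivAt_J_p {N : ℕ} (a b i : Fin N) (x : (Fin N → ℝ) × (Fin N → ℝ)) :
    HasDerivAt (fun t => J a b (x.1, Function.update x.2 i t))
      (x.1 a * (if b = i then 1 else 0) - x.1 b * (if a = i then 1 else 0)) (x.2 i) := by
  have h : (fun t => J a b (x.1, Function.update x.2 i t))
      = fun t => x.1 a * (if b = i then t else x.2 b) - x.1 b * (if a = i then t else x.2 a) := by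
    funext t; simp [J, Function.update_apply]
  rw [h]
  exact ((hasDerivAt_ite_id b i x.2 _).const_mul _).sub ((hasDerivAt_ite_id a i x.2 _).const_mul _)

lemma hasDerivAt_J_q {N : ℕ} (a b i : Fin N) (x : (Fin N → ℝ) × (Fin N → ℝ)) :
    HasDerivAt (fun t => J a b (Function.update x.1 i t, x.2))
      ((if a = i then 1 else 0) * x.2 b - (if b = i then 1 else 0) * x.2 a) (x.1 i) := by
  have h : (fun t => J a b (Function.update x.1 i t, x.2))
      = fun t => (if a = i then t else x.1 a) * x.2 b - (if b = i then t else x.1 b) * x.2 a := by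
    funext t; simp [J, Function.update_apply]
  rw [h]
  exact ((hasDerivAt_ite_id a i x.1 _).mul_const _).sub ((hasDerivAt_ite_id b i x.1 _).mul_const _)

lemma hasDerivAt_C_p {N : ℕ} (c : Fin N → Fin N → Prop) [∀ a b, Decidable (c a b)]
    (x : (Fin N → ℝ) × (Fin N → ℝ)) (i : Fin N) :
    HasDerivAt (fun t => ∑ a : Fin N, ∑ b : Fin N,
        if c a b then (J a b (x.1, Function.update x.2 i t)) ^ 2 else 0)
      (∑ a : Fin N, ∑ b : Fin N, if c a b then
          2 * J a b x * (x.1 a * (if b = i then 1 else 0) - x.1 b * (if a = i then 1 else 0))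
        else 0) (x.2 i) := by
  apply HasDerivAt.fun_sum; intro a _; apply HasDerivAt.fun_sum; intro b _
  by_cases h : c a b
  · simp only [if_pos h]
    have := (hasDerivAt_J_p a b i x).pow 2
    simp only [Function.update_eq_self] at this
    refine this.congr_deriv ?_
    push_cast; ring
  · simp only [if_neg h]; exact hasDerivAt_const _ _

lemma hasDerivAt_C_q {N : ℕ} (c : Fin N → Fin N → Prop) [∀ a b, Decidable (c a b)]
    (x : (Fin N → ℝ) × (Fin N → ℝ)) (i : Fin N) :
    HasDerivAt (fun t => ∑ a : Fin N, ∑ b : Fin N,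
        if c a b then (J a b (Function.update x.1 i t, x.2)) ^ 2 else 0)
      (∑ a : Fin N, ∑ b : Fin N, if c a b then
          2 * J a b x * ((if a = i then 1 else 0) * x.2 b - (if b = i then 1 else 0) * x.2 a)
        else 0) (x.1 i) := by
  apply HasDerivAt.fun_sum; intro a _; apply HasDerivAt.fun_sum; intro b _
  by_cases h : c a b
  · simp only [if_pos h]
    have := (hasDerivAt_J_q a b i x).pow 2
    simp only [Function.update_eq_self] at this
    refine this.congr_deriv ?_
    push_cast; ring
  · simp only [if_neg h]; exact hasDerivAt_const _ _

lemma sum_q_Cp {N : ℕ} (c : Fin N → Fin N → Prop) [∀ a b, Decidable (c a b)]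
    (x : (Fin N → ℝ) × (Fin N → ℝ)) :
    ∑ i, x.1 i * (∑ a : Fin N, ∑ b : Fin N, if c a b then
        2 * J a b x * (x.1 a * (if b = i then 1 else 0) - x.1 b * (if a = i then 1 else 0))
      else 0) = 0 := by
  simp only [Finset.mul_sum]
  rw [Finset.sum_comm]
  apply Finset.sum_eq_zero; intro a _
  rw [Finset.sum_comm]
  apply Finset.sum_eq_zero; intro b _
  by_cases h : c a b
  · simp only [if_pos h]
    have key : ∀ i ∈ Finset.univ, x.1 i *
        (2 * J a b x * (x.1 a * (if b = i then (1:ℝ) else 0) - x.1 b * (if a = i then 1 else 0)))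
        = 2 * J a b x * x.1 a * (if b = i then x.1 i else 0)
          - 2 * J a b x * x.1 b * (if a = i then x.1 i else 0) := by
      intro i _; split_ifs <;> ring
    rw [Finset.sum_congr rfl key, Finset.sum_sub_distrib, ← Finset.mul_sum, ← Finset.mul_sum]
    simp [Finset.sum_ite_eq]
    ring
  · simp [h]

lemma sum_p_Cq {N : ℕ} (c : Fin N → Fin N → Prop) [∀ a b, Decidable (c a b)]
    (x : (Fin N → ℝ) × (Fin N → ℝ)) :
    ∑ i, x.2 i * (∑ a : Fin N, ∑ b : Fin N, if c a b then
        2 * J a b x * ((if a = i then 1 else 0) * x.2 b - (if b = i then 1 else 0) * x.2 a)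
      else 0) = 0 := by
  simp only [Finset.mul_sum]
  rw [Finset.sum_comm]
  apply Finset.sum_eq_zero; intro a _
  rw [Finset.sum_comm]
  apply Finset.sum_eq_zero; intro b _
  by_cases h : c a b
  · simp only [if_pos h]
    have key : ∀ i ∈ Finset.univ, x.2 i *
        (2 * J a b x * ((if a = i then (1:ℝ) else 0) * x.2 b - (if b = i then 1 else 0) * x.2 a))
        = 2 * J a b x * x.2 b * (if a = i then x.2 i else 0)
          - 2 * J a b x * x.2 a * (if b = i then x.2 i else 0) := by
      intro i _; split_ifs <;> ring
    rw [Finset.sum_congr rfl key, Finset.sum_sub_distrib, ← Finset.mul_sum, ← Finset.mul_sum]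
    simp [Finset.sum_ite_eq]
    ring
  · simp [h]



lemma nrm_sq_pos {N : ℕ} {q : Fin N → ℝ} (hq : q ≠ 0) : 0 < ∑ i, q i ^ 2 := by
  rcases Function.ne_iff.1 hq with ⟨j, hj⟩
  have : (0:ℝ) < q j ^ 2 := pow_two_pos_of_ne_zero hj
  exact Finset.sum_pos' (fun i _ => by positivity) ⟨j, Finset.mem_univ j, this⟩

lemma nrm_pos {N : ℕ} {q : Fin N → ℝ} (hq : q ≠ 0) : 0 < nrm q :=
  Real.sqrt_pos.2 (nrm_sq_pos hq)

lemma hasDerivAt_Ham_p {N : ℕ} (η k : ℝ) (x : (Fin N → ℝ) × (Fin N → ℝ)) (i : Fin N) :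
    HasDerivAt (fun t => Ham η k (x.1, Function.update x.2 i t))
      (x.2 i * (nrm x.1 * 2 / (2 * (η + nrm x.1)))) (x.2 i) := by
  have h : (fun t => Ham η k (x.1, Function.update x.2 i t))
      = fun t => nrm x.1 * (t ^ 2 + ∑ j ∈ Finset.univ \ {i}, x.2 j ^ 2) / (2 * (η + nrm x.1))
          - k / (η + nrm x.1) := by
    funext t; simp only [Ham, sum_update_sq]
  rw [h]
  have h1 : HasDerivAt (fun t : ℝ => t ^ 2 + ∑ j ∈ Finset.univ \ {i}, x.2 j ^ 2)
      (2 * x.2 i) (x.2 i) := by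
    have := (hasDerivAt_pow 2 (x.2 i)).add_const (∑ j ∈ Finset.univ \ {i}, x.2 j ^ 2)
    refine this.congr_deriv ?_; push_cast; ring
  have h2 := ((h1.const_mul (nrm x.1)).div_const (2 * (η + nrm x.1))).sub_const
      (k / (η + nrm x.1))
  refine h2.congr_deriv ?_; ring

lemma exists_punct_filter (t₀ : ℝ) :
    ∃ L : Filter ℝ, L.NeBot ∧ L ≤ 𝓝 t₀ ∧ ∀ᶠ t in L, t₀ ^ 2 < t ^ 2 := by
  rcases le_or_gt 0 t₀ with h | h
  · refine ⟨nhdsWithin t₀ (Set.Ioi t₀), inferInstance, nhdsWithin_le_nhds, ?_⟩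
    filter_upwards [self_mem_nhdsWithin] with t ht
    have ht' : t₀ < t := ht
    nlinarith
  · refine ⟨nhdsWithin t₀ (Set.Iio t₀), inferInstance, nhdsWithin_le_nhds, ?_⟩
    filter_upwards [self_mem_nhdsWithin] with t ht
    have ht' : t < t₀ := ht
    nlinarith

lemma deriv_Ham_q {N : ℕ} (η k : ℝ) (x : (Fin N → ℝ) × (Fin N → ℝ)) (hx : x.1 ≠ 0) (i : Fin N) :
    deriv (fun t => Ham η k (Function.update x.1 i t, x.2)) (x.1 i)
      = x.1 i * ((η * (∑ j, x.2 j ^ 2) / 2 + k) / ((η + nrm x.1) ^ 2 * nrm x.1)) := by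
  set P : ℝ := ∑ j, x.2 j ^ 2 with hP
  set S : ℝ := ∑ j ∈ Finset.univ \ {i}, x.1 j ^ 2 with hSdef
  set t₀ : ℝ := x.1 i with ht₀
  set n₀ : ℝ := nrm x.1 with hn₀def
  have hS : 0 ≤ S := Finset.sum_nonneg fun j _ => sq_nonneg _
  have hsum : t₀ ^ 2 + S = ∑ j, x.1 j ^ 2 := by
    have := sum_update_sq x.1 i t₀
    rw [Function.update_eq_self] at this
    exact this.symm
  have hn₀ : 0 < n₀ := nrm_pos hx
  have hnt0 : Real.sqrt (t₀ ^ 2 + S) = n₀ := by rw [hsum]; rfl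
  have hfun : (fun t => Ham η k (Function.update x.1 i t, x.2))
      = fun t => Real.sqrt (t ^ 2 + S) * P / (2 * (η + Real.sqrt (t ^ 2 + S)))
          - k / (η + Real.sqrt (t ^ 2 + S)) := by
    funext t
    simp only [Ham, nrm, sum_update_sq, hP, hSdef]
  have hpos : 0 < t₀ ^ 2 + S := by rw [hsum]; exact nrm_sq_pos hx
  by_cases hη : η + n₀ ≠ 0
  · -- regular case
    have h1 : HasDerivAt (fun t : ℝ => t ^ 2 + S) (2 * t₀) t₀ := by
      have := (hasDerivAt_pow 2 t₀).add_const S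
      refine this.congr_deriv ?_; push_cast; ring
    have hsqrt : HasDerivAt (fun t : ℝ => Real.sqrt (t ^ 2 + S)) (t₀ / n₀) t₀ := by
      have h2 := (Real.hasDerivAt_sqrt (ne_of_gt hpos)).comp t₀ h1
      refine h2.congr_deriv ?_
      rw [hnt0]
      field_simp
    have hden2 : HasDerivAt (fun t : ℝ => η + Real.sqrt (t ^ 2 + S)) (t₀ / n₀) t₀ :=
      hsqrt.const_add η
    have hden : HasDerivAt (fun t : ℝ => 2 * (η + Real.sqrt (t ^ 2 + S))) (2 * (t₀ / n₀)) t₀ :=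
      hden2.const_mul 2
    have hnum : HasDerivAt (fun t : ℝ => Real.sqrt (t ^ 2 + S) * P) (t₀ / n₀ * P) t₀ :=
      hsqrt.mul_const P
    have hden_ne : 2 * (η + Real.sqrt (t₀ ^ 2 + S)) ≠ 0 := by
      rw [hnt0]; intro h; apply hη; linarith
    have hden2_ne : η + Real.sqrt (t₀ ^ 2 + S) ≠ 0 := by rw [hnt0]; exact hη
    have htot := (hnum.div hden hden_ne).sub ((hasDerivAt_const t₀ k).div hden2 hden2_ne)
    rw [hfun, HasDerivAt.deriv (f := fun t => Real.sqrt (t ^ 2 + S) * P / (2 * (η + Real.sqrt (t ^ 2 + S))) - k / (η + Real.sqrt (t ^ 2 + S))) htot]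
    rw [hnt0]
    have hηn : η + n₀ ≠ 0 := hη
    field_simp
    ring
  · -- singular case: η + n₀ = 0
    push_neg at hη
    have hrhs : x.1 i * ((η * P / 2 + k) / ((η + n₀) ^ 2 * n₀)) = 0 := by
      rw [hη]
      simp
    rw [hrhs]
    by_cases hPk : P = 0 ∧ k = 0
    · rw [hfun, hPk.1, hPk.2]
      simp only [mul_zero, zero_div, sub_zero]
      exact deriv_const _ _
    · rw [hfun]
      apply deriv_zero_of_not_differentiableAt
      intro hd
      have hg0 : Real.sqrt (t₀ ^ 2 + S) * P / (2 * (η + Real.sqrt (t₀ ^ 2 + S)))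
          - k / (η + Real.sqrt (t₀ ^ 2 + S)) = 0 := by
        rw [hnt0, hη]
        simp
      have hcont : Tendsto (fun t => Real.sqrt (t ^ 2 + S) * P / (2 * (η + Real.sqrt (t ^ 2 + S)))
          - k / (η + Real.sqrt (t ^ 2 + S))) (nhds t₀) (nhds 0) := by
        have := hd.continuousAt
        rw [ContinuousAt] at this
        rwa [hg0] at this
      obtain ⟨L, hLne, hle, hev⟩ := exists_punct_filter t₀
      have hη' : η = -n₀ := by linarith
      have hvpos : ∀ᶠ t in L, n₀ < Real.sqrt (t ^ 2 + S) := by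
        filter_upwards [hev] with t ht
        calc n₀ = Real.sqrt (t₀ ^ 2 + S) := hnt0.symm
          _ < Real.sqrt (t ^ 2 + S) := Real.sqrt_lt_sqrt (le_of_lt hpos) (by linarith)
      set c : ℝ := n₀ * P / 2 - k with hcdef
      have hgeq : ∀ᶠ t in L, Real.sqrt (t ^ 2 + S) * P / (2 * (η + Real.sqrt (t ^ 2 + S)))
          - k / (η + Real.sqrt (t ^ 2 + S))
          = P / 2 + c * (Real.sqrt (t ^ 2 + S) - n₀)⁻¹ := by
        filter_upwards [hvpos] with t ht
        have hne : Real.sqrt (t ^ 2 + S) - n₀ ≠ 0 := sub_ne_zero.2 (ne_of_gt ht)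
        rw [hη']
        rw [show -n₀ + Real.sqrt (t ^ 2 + S) = Real.sqrt (t ^ 2 + S) - n₀ by ring]
        field_simp
        ring
      have hv : Tendsto (fun t => Real.sqrt (t ^ 2 + S) - n₀) L (nhdsWithin 0 (Set.Ioi 0)) := by
        rw [tendsto_nhdsWithin_iff]
        constructor
        · have hc2 : ContinuousAt (fun t : ℝ => Real.sqrt (t ^ 2 + S) - n₀) t₀ := by
            apply ContinuousAt.sub _ continuousAt_const
            exact Real.continuous_sqrt.continuousAt.comp (by fun_prop)
          have := hc2.tendsto.mono_left hle
          rwa [hnt0, sub_self] at this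
        · filter_upwards [hvpos] with t ht
          exact Set.mem_Ioi.2 (by linarith)
      have hgL : Tendsto (fun t => Real.sqrt (t ^ 2 + S) * P / (2 * (η + Real.sqrt (t ^ 2 + S)))
          - k / (η + Real.sqrt (t ^ 2 + S))) L (nhds 0) := hcont.mono_left hle
      by_cases hc : c = 0
      · have hlim : Tendsto (fun t => Real.sqrt (t ^ 2 + S) * P / (2 * (η + Real.sqrt (t ^ 2 + S)))
            - k / (η + Real.sqrt (t ^ 2 + S))) L (nhds (P / 2)) := by
          apply Tendsto.congr' _ (tendsto_const_nhds (α := ℝ) (f := L))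
          filter_upwards [hgeq] with t ht
          rw [ht, hc, zero_mul, add_zero]
        have hP2 : P / 2 = 0 := tendsto_nhds_unique hlim hgL
        have hP0 : P = 0 := by linarith
        have hk : k = 0 := by
          have := hc
          rw [hcdef, hP0] at this
          simpa using this
        exact hPk ⟨hP0, hk⟩
      · have hinv : Tendsto (fun t => (Real.sqrt (t ^ 2 + S) - n₀)⁻¹) L atTop :=
          tendsto_inv_nhdsGT_zero.comp hv
        rcases lt_or_gt_of_ne hc with hneg | hpos'
        · have h1 : Tendsto (fun t => c * (Real.sqrt (t ^ 2 + S) - n₀)⁻¹) L atBot :=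
            hinv.const_mul_atTop_of_neg hneg
          have h2 : Tendsto (fun t => Real.sqrt (t ^ 2 + S) * P / (2 * (η + Real.sqrt (t ^ 2 + S)))
              - k / (η + Real.sqrt (t ^ 2 + S))) L atBot := by
            apply Tendsto.congr' _ (tendsto_atBot_add_const_left L (P / 2) h1)
            filter_upwards [hgeq] with t ht
            rw [ht]
          exact not_tendsto_nhds_of_tendsto_atBot h2 0 hgL
        · have h1 : Tendsto (fun t => c * (Real.sqrt (t ^ 2 + S) - n₀)⁻¹) L atTop :=
            hinv.const_mul_atTop hpos'
          have h2 : Tendsto (fun t => Real.sqrt (t ^ 2 + S) * P / (2 * (η + Real.sqrt (t ^ 2 + S)))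
              - k / (η + Real.sqrt (t ^ 2 + S))) L atTop := by
            apply Tendsto.congr' _ (tendsto_atTop_add_const_left L (P / 2) h1)
            filter_upwards [hgeq] with t ht
            rw [ht]
          exact not_tendsto_nhds_of_tendsto_atTop h2 0 hgL


lemma pbracket_Ham_C {N : ℕ} (η k : ℝ) (c : Fin N → Fin N → Prop) [∀ a b, Decidable (c a b)]
    (x : (Fin N → ℝ) × (Fin N → ℝ)) (hx : x.1 ≠ 0) :
    pbracket (Ham η k)
      (fun y => ∑ a : Fin N, ∑ b : Fin N, if c a b then (J a b y) ^ 2 else 0) x = 0 := by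
  simp only [pbracket]
  have e1 : ∀ i : Fin N, deriv (fun t => Ham η k (Function.update x.1 i t, x.2)) (x.1 i)
      = x.1 i * ((η * (∑ j, x.2 j ^ 2) / 2 + k) / ((η + nrm x.1) ^ 2 * nrm x.1)) :=
    fun i => deriv_Ham_q η k x hx i
  have e2 : ∀ i : Fin N, deriv (fun t => Ham η k (x.1, Function.update x.2 i t)) (x.2 i)
      = x.2 i * (nrm x.1 * 2 / (2 * (η + nrm x.1))) :=
    fun i => (hasDerivAt_Ham_p η k x i).deriv
  have e3 : ∀ i : Fin N, deriv (fun t => ∑ a : Fin N, ∑ b : Fin N,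
        if c a b then (J a b (x.1, Function.update x.2 i t)) ^ 2 else 0) (x.2 i)
      = ∑ a : Fin N, ∑ b : Fin N, if c a b then
          2 * J a b x * (x.1 a * (if b = i then 1 else 0) - x.1 b * (if a = i then 1 else 0))
        else 0 :=
    fun i => (hasDerivAt_C_p c x i).deriv
  have e4 : ∀ i : Fin N, deriv (fun t => ∑ a : Fin N, ∑ b : Fin N,
        if c a b then (J a b (Function.update x.1 i t, x.2)) ^ 2 else 0) (x.1 i)
      = ∑ a : Fin N, ∑ b : Fin N, if c a b then
          2 * J a b x * ((if a = i then 1 else 0) * x.2 b - (if b = i then 1 else 0) * x.2 a)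
        else 0 :=
    fun i => (hasDerivAt_C_q c x i).deriv
  calc ∑ i : Fin N, (deriv (fun t => Ham η k (Function.update x.1 i t, x.2)) (x.1 i) *
          deriv (fun t => ∑ a : Fin N, ∑ b : Fin N,
            if c a b then (J a b (x.1, Function.update x.2 i t)) ^ 2 else 0) (x.2 i) -
        deriv (fun t => Ham η k (x.1, Function.update x.2 i t)) (x.2 i) *
          deriv (fun t => ∑ a : Fin N, ∑ b : Fin N,
            if c a b then (J a b (Function.update x.1 i t, x.2)) ^ 2 else 0) (x.1 i))
      = ∑ i : Fin N,
          (((η * (∑ j, x.2 j ^ 2) / 2 + k) / ((η + nrm x.1) ^ 2 * nrm x.1)) *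
            (x.1 i * (∑ a : Fin N, ∑ b : Fin N, if c a b then
              2 * J a b x * (x.1 a * (if b = i then 1 else 0) - x.1 b * (if a = i then 1 else 0))
            else 0)) -
          (nrm x.1 * 2 / (2 * (η + nrm x.1))) *
            (x.2 i * (∑ a : Fin N, ∑ b : Fin N, if c a b then
              2 * J a b x * ((if a = i then 1 else 0) * x.2 b - (if b = i then 1 else 0) * x.2 a)
            else 0))) := by
        apply Finset.sum_congr rfl
        intro i _
        rw [e1 i, e2 i, e3 i, e4 i]
        ring
    _ = ((η * (∑ j, x.2 j ^ 2) / 2 + k) / ((η + nrm x.1) ^ 2 * nrm x.1)) *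
          (∑ i, x.1 i * (∑ a : Fin N, ∑ b : Fin N, if c a b then
              2 * J a b x * (x.1 a * (if b = i then 1 else 0) - x.1 b * (if a = i then 1 else 0))
            else 0)) -
        (nrm x.1 * 2 / (2 * (η + nrm x.1))) *
          (∑ i, x.2 i * (∑ a : Fin N, ∑ b : Fin N, if c a b then
              2 * J a b x * ((if a = i then 1 else 0) * x.2 b - (if b = i then 1 else 0) * x.2 a)
            else 0)) := by
        rw [Finset.sum_sub_distrib, ← Finset.mul_sum, ← Finset.mul_sum]
    _ = 0 := by rw [sum_q_Cp c x, sum_p_Cq c x]; ring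

/-- The deformed Coulomb Hamiltonian Poisson-commutes with each of the
angular observables C^{(m)} and C_{(m)} for m = 2,…,N. -/
theorem ham_commutes_angular {N : ℕ} (η k : ℝ) (m : ℕ)
    (hm2 : 2 ≤ m) (hmN : m ≤ N)
    (x : (Fin N → ℝ) × (Fin N → ℝ)) (hx : x.1 ≠ 0) :
    pbracket (Ham η k) (Cup m) x = 0 ∧
    pbracket (Ham η k) (Cdown m) x = 0 := by
  constructor
  · exact pbracket_Ham_C η k (fun a b => a < b ∧ (b : ℕ) < m) x hx
  · exact pbracket_Ham_C η k (fun a b => a < b ∧ N - m ≤ (a : ℕ)) x hx
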